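/- Let V be an n-dimensional real inner product space with orthonormal basis e_1,…,e_n, and W an m-dimensional inner product space with orthonormal basis f_1,…,f_m. Let II : V × V → W be a symmetric bilinear map, and for N ∈ W let II_N : V → V be the symmetric endomorphism with ⟨II_N X, Y⟩ = ⟨N, II(X,Y)⟩. Define the curvature R(X,Y)Z = −Σ_a ⟨II_{f_a} X, Z⟩ II_{f_a} Y + Σ_a ⟨II_{f_a} Y, Z⟩ II_{f_a} X (Gauss equation with flat ambient space) extended as a derivation to p-forms. Then for every p-form ω and X ∈ V: Σ_{s=1}^n e_s ⌟ (R(e_s, X)·ω) = − Σ_{a=1}^m II_{f_a}(X) ⌟ (II_{f_a}^{[p]} ω) + II_{nH̃}(X) ⌟ ω, where nH̃ = Σ_a (tr II_{f_a}) f_a and R(X,Y)·ω denotes the induced action of the curvature endomorphism on p-forms. -/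
import Mathlib


open scoped RealInnerProductSpace

/-- Algebraic Gauss-equation curvature identity on forms (Proposition 6.3):
with `II : V × V → W` symmetric bilinear, shape operators `S N` determined by
`⟨S N X, Y⟩ = ⟨N, II X Y⟩`, and the curvature
`R(X,Y)Z = −∑_a ⟨S f_a X, Z⟩ S f_a Y + ∑_a ⟨S f_a Y, Z⟩ S f_a X` acting on a
`(p+1)`-form `ω` as a derivation (with a minus sign), one has, pointwise on tuples:
`∑_s e_s ⌟ (R(e_s, X)·ω) = −∑_a II_{f_a}(X) ⌟ (II_{f_a}^{[p+1]} ω) + II_{nH̃}(X) ⌟ ω`,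
where `nH̃ = ∑_s II(e_s, e_s)`. -/
theorem gauss_curvature_term_on_forms {n m p : ℕ} {V W : Type*}
    [NormedAddCommGroup V] [InnerProductSpace ℝ V]
    [NormedAddCommGroup W] [InnerProductSpace ℝ W]
    (e : OrthonormalBasis (Fin n) ℝ V) (f : OrthonormalBasis (Fin m) ℝ W)
    (II : V →ₗ[ℝ] V →ₗ[ℝ] W) (hII : ∀ X Y, II X Y = II Y X)
    (S : W → V →ₗ[ℝ] V) (hS : ∀ N X Y, ⟪S N X, Y⟫ = ⟪N, II X Y⟫)
    (R : V → V → V →ₗ[ℝ] V)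
    (hR : ∀ X Y Z : V, R X Y Z =
      -∑ a : Fin m, ⟪S (f a) X, Z⟫ • S (f a) Y + ∑ a : Fin m, ⟪S (f a) Y, Z⟫ • S (f a) X)
    (ω : V [⋀^Fin (p + 1)]→ₗ[ℝ] ℝ) (X : V) (v : Fin p → V) :
    ∑ s : Fin n,
        -(∑ j : Fin (p + 1),
          ω (Function.update (Fin.cons (e s) v : Fin (p + 1) → V) j
            (R (e s) X ((Fin.cons (e s) v : Fin (p + 1) → V) j)))) =
      -(∑ a : Fin m, ∑ j : Fin (p + 1),
          ω (Function.update (Fin.cons (S (f a) X) v : Fin (p + 1) → V) j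
            (S (f a) ((Fin.cons (S (f a) X) v : Fin (p + 1) → V) j)))) +
        ω (Fin.cons (S (∑ s : Fin n, II (e s) (e s)) X) v) := by
  classical
  -- symmetry of the shape operators
  have hsymm : ∀ (N : W) (x y : V), ⟪S N x, y⟫ = ⟪x, S N y⟫ := by
    intro N x y
    rw [hS, hII, ← hS, real_inner_comm]
  -- basis expansion of shape operator values
  have hexp : ∀ (N : W) (z : V), S N z = ∑ s : Fin n, ⟪S N (e s), z⟫ • e s := by
    intro N z
    conv_lhs => rw [← e.sum_repr' (S N z)]
    exact Finset.sum_congr rfl fun s _ => by rw [hsymm]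
  -- shape operator of the mean curvature vector
  have hnH : S (∑ s : Fin n, II (e s) (e s)) X
      = ∑ a : Fin m, (∑ s : Fin n, ⟪S (f a) (e s), e s⟫) • S (f a) X := by
    apply ext_inner_right ℝ
    intro y
    rw [hS, sum_inner, sum_inner]
    have h1 : ∀ s : Fin n, ⟪II (e s) (e s), II X y⟫
        = ∑ a : Fin m, ⟪S (f a) (e s), e s⟫ * ⟪S (f a) X, y⟫ := by
      intro s
      conv_lhs => rw [← f.sum_repr' (II X y)]
      rw [inner_sum]
      refine Finset.sum_congr rfl fun a _ => ?_
      rw [real_inner_smul_right, ← hS, real_inner_comm (f a) (II (e s) (e s)), ← hS]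
      ring
    rw [Finset.sum_congr rfl fun s _ => h1 s, Finset.sum_comm]
    exact Finset.sum_congr rfl fun a _ => by rw [real_inner_smul_left, Finset.sum_mul]
  -- `L u x = ω (cons x u)` as a linear map in `x`
  set L : (Fin p → V) → V →ₗ[ℝ] ℝ :=
    fun u => ω.toMultilinearMap.toLinearMap (Fin.cons 0 u) 0 with hLdef
  have hL : ∀ (u : Fin p → V) (x : V), L u x = ω (Fin.cons x u) := by
    intro u x
    show ω (Function.update (Fin.cons 0 u) 0 x) = _
    rw [Fin.update_cons_zero]
  -- `M x i c = ω (update (cons x v) i.succ c)` as a linear map in `c`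
  set M : V → Fin p → V →ₗ[ℝ] ℝ :=
    fun x i => ω.toMultilinearMap.toLinearMap (Fin.cons x v) i.succ with hMdef
  have hM : ∀ (x : V) (i : Fin p) (c : V),
      M x i c = ω (Function.update (Fin.cons x v) i.succ c) := fun x i c => rfl
  have hML : ∀ (x : V) (i : Fin p) (c : V),
      M x i c = L (Function.update v i c) x := by
    intro x i c
    rw [hM, hL, Fin.cons_update]
  -- antisymmetry
  have hMzero : ∀ (i : Fin p) (c : V), M c i c = 0 := by
    intro i c
    rw [hM]
    refine ω.map_eq_zero_of_eq _ (i := (0 : Fin (p+1))) (j := i.succ) ?_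
      (Fin.succ_ne_zero i).symm
    rw [Function.update_of_ne (Fin.succ_ne_zero i).symm, Fin.cons_zero, Function.update_self]
  have hMadd1 : ∀ (x c : V) (i : Fin p) (y : V), M (x + c) i y = M x i y + M c i y := by
    intro x c i y
    rw [hML, hML, hML, map_add]
  have hswap : ∀ (i : Fin p) (x c : V), M x i c = - M c i x := by
    intro i x c
    have h0 := hMzero i (x + c)
    rw [map_add, hMadd1, hMadd1, hMzero, hMzero] at h0
    linarith
  -- the "trace against alternating" vanishing lemma
  have hzsum : ∀ (a : Fin m) (i : Fin p),
      ∑ s : Fin n, M (e s) i (S (f a) (e s)) = 0 := by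
    intro a i
    have hQ : ∀ s : Fin n, M (e s) i (S (f a) (e s))
        = ∑ t : Fin n, ⟪S (f a) (e t), e s⟫ * M (e s) i (e t) := by
      intro s
      conv_lhs => rw [hexp (f a) (e s)]
      rw [map_sum]
      exact Finset.sum_congr rfl fun t _ => by rw [map_smul, smul_eq_mul]
    have hZ : (∑ s : Fin n, ∑ t : Fin n, ⟪S (f a) (e t), e s⟫ * M (e s) i (e t))
        = - ∑ s : Fin n, ∑ t : Fin n, ⟪S (f a) (e t), e s⟫ * M (e s) i (e t) := by
      calc (∑ s : Fin n, ∑ t : Fin n, ⟪S (f a) (e t), e s⟫ * M (e s) i (e t))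
          = ∑ s : Fin n, ∑ t : Fin n, ⟪S (f a) (e s), e t⟫ * M (e t) i (e s) :=
            Finset.sum_comm
        _ = ∑ s : Fin n, ∑ t : Fin n, -(⟪S (f a) (e t), e s⟫ * M (e s) i (e t)) := by
            refine Finset.sum_congr rfl fun s _ => Finset.sum_congr rfl fun t _ => ?_
            rw [hswap i (e t) (e s), hsymm, real_inner_comm]
            ring
        _ = - ∑ s : Fin n, ∑ t : Fin n, ⟪S (f a) (e t), e s⟫ * M (e s) i (e t) := by
            simp [Finset.sum_neg_distrib]
    rw [Finset.sum_congr rfl fun s _ => hQ s]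
    linarith
  -- sum of curvature along the diagonal
  have hRdiag : (∑ s : Fin n, R (e s) X (e s))
      = -(S (∑ s : Fin n, II (e s) (e s)) X) + ∑ a : Fin m, S (f a) (S (f a) X) := by
    rw [Finset.sum_congr rfl fun s _ => hR (e s) X (e s), Finset.sum_add_distrib]
    congr 1
    · simp only [hnH, Finset.sum_smul, Finset.sum_neg_distrib, neg_inj]
      exact Finset.sum_comm
    · rw [Finset.sum_comm]
      refine Finset.sum_congr rfl fun a _ => ?_
      have h5 : ∑ s : Fin n, ⟪S (f a) X, e s⟫ • S (f a) (e s)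
          = S (f a) (∑ s : Fin n, ⟪S (f a) X, e s⟫ • e s) := by
        rw [map_sum]
        exact Finset.sum_congr rfl fun s _ => by rw [map_smul]
      rw [h5]
      congr 1
      conv_rhs => rw [← e.sum_repr' (S (f a) X)]
      exact Finset.sum_congr rfl fun s _ => by rw [real_inner_comm]
  -- splitting the index sum of the derivation action
  have hsplit : ∀ (x : V) (T : V →ₗ[ℝ] V),
      (∑ j : Fin (p + 1),
        ω (Function.update (Fin.cons x v : Fin (p + 1) → V) j
          (T ((Fin.cons x v : Fin (p + 1) → V) j))))
        = L v (T x) + ∑ i : Fin p, M x i (T (v i)) := by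
    intro x T
    rw [Fin.sum_univ_succ]
    congr 1
    · rw [Fin.cons_zero, Fin.update_cons_zero, hL]
  -- the second-slot terms
  have hterm2 : ∀ i : Fin p, ∑ s : Fin n, M (e s) i (R (e s) X (v i))
      = ∑ a : Fin m, M (S (f a) X) i (S (f a) (v i)) := by
    intro i
    have h1 : ∀ s : Fin n, M (e s) i (R (e s) X (v i))
        = -∑ a : Fin m, ⟪S (f a) (e s), v i⟫ * M (e s) i (S (f a) X)
          + ∑ a : Fin m, ⟪S (f a) X, v i⟫ * M (e s) i (S (f a) (e s)) := by
      intro s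
      rw [hR, map_add, map_neg, map_sum, map_sum]
      simp only [map_smul, smul_eq_mul]
    rw [Finset.sum_congr rfl fun s _ => h1 s, Finset.sum_add_distrib]
    have h2 : ∑ s : Fin n, ∑ a : Fin m, ⟪S (f a) X, v i⟫ * M (e s) i (S (f a) (e s)) = 0 := by
      rw [Finset.sum_comm]
      refine Finset.sum_eq_zero fun a _ => ?_
      rw [← Finset.mul_sum, hzsum a i, mul_zero]
    rw [h2, add_zero]
    have h3 : ∀ a : Fin m, ∑ s : Fin n, ⟪S (f a) (e s), v i⟫ * M (e s) i (S (f a) X)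
        = - M (S (f a) X) i (S (f a) (v i)) := by
      intro a
      have h4 : ∀ s : Fin n, ⟪S (f a) (e s), v i⟫ * M (e s) i (S (f a) X)
          = L (Function.update v i (S (f a) X)) (⟪S (f a) (e s), v i⟫ • e s) := by
        intro s
        rw [map_smul, hML, smul_eq_mul]
      calc ∑ s : Fin n, ⟪S (f a) (e s), v i⟫ * M (e s) i (S (f a) X)
          = ∑ s : Fin n, L (Function.update v i (S (f a) X)) (⟪S (f a) (e s), v i⟫ • e s) :=
            Finset.sum_congr rfl fun s _ => h4 s
        _ = L (Function.update v i (S (f a) X)) (∑ s : Fin n, ⟪S (f a) (e s), v i⟫ • e s) :=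
            (map_sum _ _ _).symm
        _ = L (Function.update v i (S (f a) X)) (S (f a) (v i)) := by rw [← hexp]
        _ = M (S (f a) (v i)) i (S (f a) X) := (hML _ _ _).symm
        _ = - M (S (f a) X) i (S (f a) (v i)) := hswap _ _ _
    calc ∑ s : Fin n, -∑ a : Fin m, ⟪S (f a) (e s), v i⟫ * M (e s) i (S (f a) X)
        = -∑ a : Fin m, ∑ s : Fin n, ⟪S (f a) (e s), v i⟫ * M (e s) i (S (f a) X) := by
          rw [Finset.sum_neg_distrib, Finset.sum_comm]
      _ = ∑ a : Fin m, M (S (f a) X) i (S (f a) (v i)) := by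
          rw [Finset.sum_congr rfl fun a _ => h3 a]
          simp [Finset.sum_neg_distrib]
  -- assemble everything
  have hRHS : (∑ a : Fin m, ∑ j : Fin (p + 1),
        ω (Function.update (Fin.cons (S (f a) X) v : Fin (p + 1) → V) j
          (S (f a) ((Fin.cons (S (f a) X) v : Fin (p + 1) → V) j))))
      = ∑ a : Fin m, (L v (S (f a) (S (f a) X)) + ∑ i : Fin p, M (S (f a) X) i (S (f a) (v i))) :=
    Finset.sum_congr rfl fun a _ => hsplit (S (f a) X) (S (f a))
  calc ∑ s : Fin n,
        -(∑ j : Fin (p + 1),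
          ω (Function.update (Fin.cons (e s) v : Fin (p + 1) → V) j
            (R (e s) X ((Fin.cons (e s) v : Fin (p + 1) → V) j))))
      = ∑ s : Fin n, -(L v (R (e s) X (e s)) + ∑ i : Fin p, M (e s) i (R (e s) X (v i))) := by
        refine Finset.sum_congr rfl fun s _ => ?_
        rw [hsplit (e s) (R (e s) X)]
    _ = -(L v (∑ s : Fin n, R (e s) X (e s)))
          - ∑ i : Fin p, ∑ s : Fin n, M (e s) i (R (e s) X (v i)) := by
        rw [map_sum, Finset.sum_comm (s := Finset.univ) (t := Finset.univ)
          (f := fun i s => M (e s) i (R (e s) X (v i)))]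
        simp only [Finset.sum_add_distrib, neg_add, sub_eq_add_neg, Finset.sum_neg_distrib]
    _ = L v (S (∑ s : Fin n, II (e s) (e s)) X) - ∑ a : Fin m, L v (S (f a) (S (f a) X))
          - ∑ i : Fin p, ∑ a : Fin m, M (S (f a) X) i (S (f a) (v i)) := by
        rw [hRdiag, map_add, map_neg, map_sum, Finset.sum_congr rfl fun i _ => hterm2 i]
        ring
    _ = -(∑ a : Fin m, (L v (S (f a) (S (f a) X))
            + ∑ i : Fin p, M (S (f a) X) i (S (f a) (v i))))
          + L v (S (∑ s : Fin n, II (e s) (e s)) X) := by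
        rw [Finset.sum_add_distrib, Finset.sum_comm (s := Finset.univ) (t := Finset.univ)
          (f := fun a i => M (S (f a) X) i (S (f a) (v i)))]
        ring
    _ = _ := by rw [← hRHS, hL]
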